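/- Let X be a compact Hausdorff space, Γ ⊆ [Y]^{≤ω} × [X\Y]^{≤ω} a σ-closed cofinal subposet (under coordinatewise inclusion), and {r_{(A,B)} : (A,B) ∈ Γ} an r-skeleton on X with induced space Y satisfying: every countable B ⊆ X \ Y is discrete in X \ Y with cl_X(B) \ B ⊆ Y cosmic, and A ⊆ r_{(A,B)}(X), cl_X(B) \ B ⊆ r_{(A,B)}(X) for all (A,B) ∈ Γ. Define R_{(A,B)} on AD(X) by R_{(A,B)}(x,1) = (x,1) if x ∈ A ∪ B, and R_{(A,B)}(x,i) = (r_{(A,B)}(x), 0) otherwise. Then {R_{(A,B)} : (A,B) ∈ Γ} is an r-skeleton on AD(X). -/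

import Mathlib

/-- A space has a countable network. -/
def HasCountableNetwork (Y : Type*) [TopologicalSpace Y] : Prop :=
  ∃ N : Set (Set Y), N.Countable ∧
    ∀ (y : Y) (U : Set Y), IsOpen U → y ∈ U → ∃ n ∈ N, y ∈ n ∧ n ⊆ U

/-- An r-skeleton on a space `X` indexed by a poset `Γ`. -/
def IsRSkeleton (X : Type*) [TopologicalSpace X] (Γ : Type*) [Preorder Γ]
    (r : Γ → X → X) : Prop :=
  (∀ s t : Γ, ∃ u, s ≤ u ∧ t ≤ u) ∧
  (∀ c : ℕ →o Γ, ∃ s, IsLUB (Set.range c) s) ∧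
  (∀ s, Continuous (r s)) ∧
  (∀ s x, r s (r s x) = r s x) ∧
  (∀ s, HasCountableNetwork (Set.range (r s))) ∧
  (∀ s t, s ≤ t → ∀ x, r s (r t x) = r s x ∧ r t (r s x) = r s x) ∧
  (∀ (c : ℕ →o Γ) (s : Γ), IsLUB (Set.range c) s →
    ∀ x, Filter.Tendsto (fun n => r (c n) x) Filter.atTop (nhds (r s x))) ∧
  (∀ x, Filter.Tendsto (fun s => r s x) Filter.atTop (nhds x))

/-- The Alexandroff duplicate of `X`, as a type. -/
def AD (X : Type*) := X × Bool

/-- The Alexandroff duplicate topology: all points of `X × {1}` are isolated and the basic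
neighbourhoods of `(x, 0)` are the sets `(U × {0,1}) \ {(x,1)}` with `U` an open
neighbourhood of `x`. -/
instance (X : Type*) [TopologicalSpace X] : TopologicalSpace (AD X) where
  IsOpen S := ∀ x : X, ((x, false) : X × Bool) ∈ S →
    ∃ U : Set X, IsOpen U ∧ x ∈ U ∧
      (U ×ˢ (Set.univ : Set Bool)) \ {((x, true) : X × Bool)} ⊆ S
  isOpen_univ := fun x _ => ⟨Set.univ, isOpen_univ, trivial, fun _ _ => trivial⟩
  isOpen_inter := by
    intro S T hS hT x hx
    obtain ⟨U, hU, hxU, hUS⟩ := hS x hx.1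
    obtain ⟨V, hV, hxV, hVT⟩ := hT x hx.2
    refine ⟨U ∩ V, hU.inter hV, ⟨hxU, hxV⟩, fun p hp => ?_⟩
    exact ⟨hUS ⟨⟨hp.1.1.1, hp.1.2⟩, hp.2⟩, hVT ⟨⟨hp.1.1.2, hp.1.2⟩, hp.2⟩⟩
  isOpen_sUnion := by
    intro 𝒮 h x hx
    obtain ⟨S, hS, hxS⟩ := hx
    obtain ⟨U, hU, hxU, hUS⟩ := h S hS x hxS
    exact ⟨U, hU, hxU, fun p hp => ⟨S, hS, hUS hp⟩⟩


section ADHelpers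

variable {Z : Type*} [TopologicalSpace Z]

lemma ad_isOpen_iff (S : Set (AD Z)) : IsOpen S ↔ ∀ x : Z, ((x, false) : Z × Bool) ∈ S →
    ∃ U : Set Z, IsOpen U ∧ x ∈ U ∧
      (U ×ˢ (Set.univ : Set Bool)) \ {((x, true) : Z × Bool)} ⊆ S := Iff.rfl

/-- The canonical embedding of `Z` into its Alexandroff duplicate as the non-isolated copy. -/
def adFalse {Z : Type*} (x : Z) : AD Z := (x, false)

lemma continuous_adFalse : Continuous (adFalse : Z → AD Z) := by
  rw [continuous_def]
  intro S hS
  rw [isOpen_iff_forall_mem_open]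
  intro x hx
  obtain ⟨U, hU, hxU, hsub⟩ := (ad_isOpen_iff S).mp hS x hx
  refine ⟨U, fun y hy => hsub ⟨⟨hy, trivial⟩, fun h => ?_⟩, hU, hxU⟩
  exact Bool.noConfusion (congrArg Prod.snd (Set.eq_of_mem_singleton h))

end ADHelpers

/-- Theorem 4.6, sufficiency: Given an r-skeleton on `X` indexed by a
σ-closed cofinal `Γ ⊆ [Y]^{≤ω} × [X \ Y]^{≤ω}` satisfying (*), (**) and (***), the
family `R_{(A,B)}` defined on the Alexandroff duplicate is an r-skeleton on `AD X`. -/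
theorem AD_rSkeleton_of_conditions {X : Type u} [TopologicalSpace X] [CompactSpace X]
    [T2Space X]
    (Y : Set X)
    (Γ : Set ({A : Set X // A ⊆ Y ∧ A.Countable} × {B : Set X // B ⊆ Yᶜ ∧ B.Countable}))
    -- `Γ` is σ-closed
    (hσ : ∀ c : ℕ →o {A : Set X // A ⊆ Y ∧ A.Countable} ×
        {B : Set X // B ⊆ Yᶜ ∧ B.Countable},
      (∀ n, c n ∈ Γ) → ∀ p, IsLUB (Set.range c) p → p ∈ Γ)
    -- `Γ` is cofinal
    (hcof : ∀ p : {A : Set X // A ⊆ Y ∧ A.Countable} ×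
        {B : Set X // B ⊆ Yᶜ ∧ B.Countable}, ∃ q ∈ Γ, p ≤ q)
    (r : Γ → X → X) (hr : IsRSkeleton X Γ r)
    (hY : Y = ⋃ p : Γ, Set.range (r p))
    -- (*): every countable `B ⊆ X \ Y` is discrete in `X \ Y`
    (hdisc : ∀ B : Set X, B ⊆ Yᶜ → B.Countable →
      ∀ x ∈ B, ∃ U : Set X, IsOpen U ∧ x ∈ U ∧ U ∩ Yᶜ ∩ B = {x})
    -- (**): `cl(B) \ B ⊆ Y` and is cosmic
    (hcl : ∀ B : Set X, B ⊆ Yᶜ → B.Countable →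
      closure B \ B ⊆ Y ∧ HasCountableNetwork (closure B \ B : Set X))
    -- (***)
    (hmem : ∀ p : Γ, (p.1.1 : Set X) ⊆ Set.range (r p) ∧
      closure (p.1.2 : Set X) \ (p.1.2 : Set X) ⊆ Set.range (r p))
    (R : Γ → AD X → AD X)
    (hR1 : ∀ (p : Γ) (x : X), x ∈ (p.1.1 : Set X) ∪ (p.1.2 : Set X) →
      R p (x, true) = (x, true))
    (hR2 : ∀ (p : Γ) (x : X), x ∉ (p.1.1 : Set X) ∪ (p.1.2 : Set X) →
      R p (x, true) = (r p x, false))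
    (hR3 : ∀ (p : Γ) (x : X), R p (x, false) = (r p x, false)) :
    IsRSkeleton (AD X) Γ R := by
  obtain ⟨hdir, hlub, hcont, hidem, hnet, hcomm, hsig, hlim⟩ := hr
  have hfix : ∀ (p : Γ) (y : X), y ∈ Set.range (r p) → r p y = y := by
    rintro p y ⟨z, rfl⟩; exact hidem p z
  have hle_sets : ∀ {p q : Γ}, p ≤ q →
      ((p.1.1 : Set X) ⊆ (q.1.1 : Set X)) ∧ ((p.1.2 : Set X) ⊆ (q.1.2 : Set X)) :=
    fun h => ⟨h.1, h.2⟩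
  -- characterization of least upper bounds of ω-chains in Γ
  have lub_char : ∀ (c : ℕ →o Γ) (s : Γ), IsLUB (Set.range c) s →
      ((s.1.1 : Set X) = ⋃ n, ((c n).1.1 : Set X)) ∧
      ((s.1.2 : Set X) = ⋃ n, ((c n).1.2 : Set X)) := by
    intro c s hs
    have hAUp : (⋃ n, ((c n).1.1 : Set X)) ⊆ Y ∧ (⋃ n, ((c n).1.1 : Set X)).Countable :=
      ⟨Set.iUnion_subset fun n => (c n).1.1.2.1,
        Set.countable_iUnion fun n => (c n).1.1.2.2⟩
    have hBUp : (⋃ n, ((c n).1.2 : Set X)) ⊆ Yᶜ ∧ (⋃ n, ((c n).1.2 : Set X)).Countable :=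
      ⟨Set.iUnion_subset fun n => (c n).1.2.2.1,
        Set.countable_iUnion fun n => (c n).1.2.2.2⟩
    set p₀ : {A : Set X // A ⊆ Y ∧ A.Countable} × {B : Set X // B ⊆ Yᶜ ∧ B.Countable} :=
      (⟨_, hAUp⟩, ⟨_, hBUp⟩) with hp₀
    set c' : ℕ →o ({A : Set X // A ⊆ Y ∧ A.Countable} × {B : Set X // B ⊆ Yᶜ ∧ B.Countable}) :=
      ⟨fun n => (c n).1, fun m n h => c.monotone h⟩ with hc'
    have hlub₀ : IsLUB (Set.range c') p₀ := by
      constructor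
      · rintro _ ⟨n, rfl⟩
        exact ⟨Set.subset_iUnion (fun k => ((c k).1.1 : Set X)) n,
          Set.subset_iUnion (fun k => ((c k).1.2 : Set X)) n⟩
      · rintro q hq
        exact ⟨Set.iUnion_subset fun n => (hq ⟨n, rfl⟩).1,
          Set.iUnion_subset fun n => (hq ⟨n, rfl⟩).2⟩
    have hp₀Γ : p₀ ∈ Γ := hσ c' (fun n => (c n).2) p₀ hlub₀
    have h1 : s ≤ (⟨p₀, hp₀Γ⟩ : Γ) := hs.2 (by rintro _ ⟨n, rfl⟩; exact hlub₀.1 ⟨n, rfl⟩)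
    have h2 : (⟨p₀, hp₀Γ⟩ : Γ) ≤ s := hlub₀.2 (by rintro _ ⟨n, rfl⟩; exact hs.1 ⟨n, rfl⟩)
    have heq : s = ⟨p₀, hp₀Γ⟩ := le_antisymm h1 h2
    exact ⟨by rw [heq], by rw [heq]⟩
  refine ⟨hdir, hlub, ?_, ?_, ?_, ?_, ?_, ?_⟩
  · -- continuity
    intro p
    rw [continuous_def]
    intro S hS
    rw [ad_isOpen_iff]
    intro x hx
    change R p (x, false) ∈ S at hx
    rw [hR3] at hx
    obtain ⟨U, hU, hrxU, hUS⟩ := (ad_isOpen_iff S).mp hS (r p x) hx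
    obtain ⟨V₁, hV₁o, hxV₁, hV₁key⟩ : ∃ V₁ : Set X, IsOpen V₁ ∧ x ∈ V₁ ∧
        ∀ y ∈ V₁, y ∈ (p.1.2 : Set X) → y ≠ x → y ∈ U ∧ y ≠ r p x := by
      by_cases hxB : x ∈ (p.1.2 : Set X)
      · obtain ⟨U₀, hU₀o, hxU₀, hU₀⟩ := hdisc _ p.1.2.2.1 p.1.2.2.2 x hxB
        refine ⟨U₀, hU₀o, hxU₀, fun y hyU₀ hyB hyx => absurd ?_ hyx⟩
        have hy : y ∈ U₀ ∩ Yᶜ ∩ (p.1.2 : Set X) := ⟨⟨hyU₀, p.1.2.2.1 hyB⟩, hyB⟩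
        rw [hU₀] at hy
        exact hy
      · by_cases hxcl : x ∈ closure (p.1.2 : Set X)
        · have hxr : r p x = x := hfix p x ((hmem p).2 ⟨hxcl, hxB⟩)
          exact ⟨U, hU, by rw [hxr] at hrxU; exact hrxU,
            fun y hyU _ hyx => ⟨hyU, by rw [hxr]; exact hyx⟩⟩
        · exact ⟨(closure (p.1.2 : Set X))ᶜ, isClosed_closure.isOpen_compl, hxcl,
            fun y hy hyB _ => absurd (subset_closure hyB) hy⟩
    obtain ⟨V₂, hV₂o, hxV₂, hV₂key⟩ : ∃ V₂ : Set X, IsOpen V₂ ∧ x ∈ V₂ ∧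
        ∀ y ∈ V₂, y ≠ x → y ≠ r p x := by
      by_cases hrx : r p x = x
      · exact ⟨Set.univ, isOpen_univ, trivial, fun y _ hyx => by rw [hrx]; exact hyx⟩
      · exact ⟨{r p x}ᶜ, isClosed_singleton.isOpen_compl,
          fun h => hrx (Set.eq_of_mem_singleton h).symm, fun y hy _ => hy⟩
    refine ⟨r p ⁻¹' U ∩ (V₁ ∩ V₂), (hU.preimage (hcont p)).inter (hV₁o.inter hV₂o),
      ⟨hrxU, hxV₁, hxV₂⟩, ?_⟩
    rintro ⟨y, i⟩ ⟨⟨⟨hyU, hyV₁, hyV₂⟩, -⟩, hne⟩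
    show R p (y, i) ∈ S
    cases i with
    | false =>
      rw [hR3]
      exact hUS ⟨⟨hyU, trivial⟩,
        fun h => Bool.noConfusion (congrArg Prod.snd (Set.eq_of_mem_singleton h))⟩
    | true =>
      have hyx : y ≠ x := fun h => hne (by rw [h]; rfl)
      by_cases hyAB : y ∈ (p.1.1 : Set X) ∪ (p.1.2 : Set X)
      · rw [hR1 p y hyAB]
        have hyU' : y ∈ U ∧ y ≠ r p x := by
          cases hyAB with
          | inl hA =>
            refine ⟨?_, hV₂key y hyV₂ hyx⟩
            have hfy := hfix p y ((hmem p).1 hA)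
            rw [← hfy]; exact hyU
          | inr hB => exact hV₁key y hyV₁ hB hyx
        exact hUS ⟨⟨hyU'.1, trivial⟩,
          fun h => hyU'.2 (congrArg Prod.fst (Set.eq_of_mem_singleton h))⟩
      · rw [hR2 p y hyAB]
        exact hUS ⟨⟨hyU, trivial⟩,
          fun h => Bool.noConfusion (congrArg Prod.snd (Set.eq_of_mem_singleton h))⟩
  · -- idempotence
    rintro p ⟨x, i⟩
    cases i with
    | false => rw [hR3 p x, hR3 p (r p x), hidem]
    | true =>
      by_cases h : x ∈ (p.1.1 : Set X) ∪ (p.1.2 : Set X)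
      · rw [hR1 p x h, hR1 p x h]
      · rw [hR2 p x h, hR3 p (r p x), hidem]
  · -- countable network
    intro p
    obtain ⟨N₀, hN₀c, hN₀⟩ := hnet p
    have hmemF : ∀ y : Set.range (r p), ((y : X), false) ∈ Set.range (R p) := by
      intro y
      exact ⟨((y : X), false), by rw [hR3, hfix p y y.2]⟩
    set emb : Set.range (r p) → Set.range (R p) := fun y => ⟨((y : X), false), hmemF y⟩
      with hembd
    refine ⟨((Set.image emb) '' N₀) ∪
      ((fun a => {z : Set.range (R p) | (z : AD X) = (a, true)}) ''
        ((p.1.1 : Set X) ∪ (p.1.2 : Set X))), ?_, ?_⟩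
    · exact (hN₀c.image _).union (((p.1.1.2.2).union p.1.2.2.2).image _)
    · rintro ⟨⟨a, i⟩, hz⟩ U hUo hzU
      cases i with
      | true =>
        have haAB : a ∈ (p.1.1 : Set X) ∪ (p.1.2 : Set X) := by
          obtain ⟨⟨w, j⟩, hw⟩ := hz
          cases j with
          | false =>
            rw [hR3] at hw
            exact Bool.noConfusion (congrArg Prod.snd hw)
          | true =>
            by_cases hwAB : w ∈ (p.1.1 : Set X) ∪ (p.1.2 : Set X)
            · rw [hR1 p w hwAB] at hw
              change ((w, true) : X × Bool) = (a, true) at hw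
              rw [Prod.mk.injEq] at hw
              rwa [← hw.1]
            · rw [hR2 p w hwAB] at hw
              exact Bool.noConfusion (congrArg Prod.snd hw)
        refine ⟨{z : Set.range (R p) | (z : AD X) = (a, true)},
          Or.inr ⟨a, haAB, rfl⟩, rfl, ?_⟩
        intro z' hz'
        have : z' = ⟨(a, true), hz⟩ := Subtype.ext hz'
        rw [this]; exact hzU
      | false =>
        have haR : a ∈ Set.range (r p) := by
          obtain ⟨⟨w, j⟩, hw⟩ := hz
          cases j with
          | false =>
            rw [hR3] at hw
            exact ⟨w, congrArg Prod.fst hw⟩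
          | true =>
            by_cases hwAB : w ∈ (p.1.1 : Set X) ∪ (p.1.2 : Set X)
            · rw [hR1 p w hwAB] at hw
              exact Bool.noConfusion (congrArg Prod.snd hw)
            · rw [hR2 p w hwAB] at hw
              exact ⟨w, congrArg Prod.fst hw⟩
        obtain ⟨O, hO, rfl⟩ := isOpen_induced_iff.mp hUo
        have hzO : ((a, false) : AD X) ∈ O := hzU
        obtain ⟨W, hWo, haW, hWO⟩ := (ad_isOpen_iff O).mp hO a hzO
        obtain ⟨n, hnN₀, han, hnW⟩ := hN₀ ⟨a, haR⟩ (Subtype.val ⁻¹' W)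
          (hWo.preimage continuous_subtype_val) haW
        refine ⟨emb '' n, Or.inl ⟨n, hnN₀, rfl⟩, ⟨⟨a, haR⟩, han, Subtype.ext rfl⟩, ?_⟩
        rintro z' ⟨y, hyn, rfl⟩
        show ((y : X), false) ∈ O
        exact hWO ⟨⟨hnW hyn, trivial⟩,
          fun h => Bool.noConfusion (congrArg Prod.snd (Set.eq_of_mem_singleton h))⟩
  · -- commutation
    rintro p q hpq ⟨x, i⟩
    cases i with
    | false =>
      constructor
      · rw [hR3 q x, hR3 p (r q x), hR3 p x, (hcomm p q hpq x).1]
      · rw [hR3 p x, hR3 q (r p x), (hcomm p q hpq x).2]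
    | true =>
      by_cases hq : x ∈ (q.1.1 : Set X) ∪ (q.1.2 : Set X)
      · by_cases hp : x ∈ (p.1.1 : Set X) ∪ (p.1.2 : Set X)
        · constructor
          · rw [hR1 q x hq]
          · rw [hR1 p x hp, hR1 q x hq]
        · constructor
          · rw [hR1 q x hq]
          · rw [hR2 p x hp, hR3 q (r p x), (hcomm p q hpq x).2]
      · have hp : x ∉ (p.1.1 : Set X) ∪ (p.1.2 : Set X) := fun h =>
          hq (Set.union_subset_union (hle_sets hpq).1 (hle_sets hpq).2 h)
        constructor
        · rw [hR2 q x hq, hR3 p (r q x), hR2 p x hp, (hcomm p q hpq x).1]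
        · rw [hR2 p x hp, hR3 q (r p x), (hcomm p q hpq x).2]
  · -- σ-continuity along chains
    rintro c s hs ⟨x, i⟩
    have hub : ∀ n, c n ≤ s := fun n => hs.1 ⟨n, rfl⟩
    cases i with
    | false =>
      rw [hR3]
      exact Filter.Tendsto.congr (fun n => (hR3 (c n) x).symm)
        ((continuous_adFalse.tendsto (r s x)).comp (hsig c s hs x))
    | true =>
      by_cases hx : x ∈ (s.1.1 : Set X) ∪ (s.1.2 : Set X)
      · rw [hR1 s x hx]
        obtain ⟨hAeq, hBeq⟩ := lub_char c s hs
        have hev : ∃ n₀, x ∈ ((c n₀).1.1 : Set X) ∪ ((c n₀).1.2 : Set X) := by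
          cases hx with
          | inl h =>
            rw [hAeq] at h
            obtain ⟨n, hn⟩ := Set.mem_iUnion.mp h
            exact ⟨n, Or.inl hn⟩
          | inr h =>
            rw [hBeq] at h
            obtain ⟨n, hn⟩ := Set.mem_iUnion.mp h
            exact ⟨n, Or.inr hn⟩
        obtain ⟨n₀, hn₀⟩ := hev
        apply Filter.Tendsto.mono_right _ (pure_le_nhds _)
        refine Filter.tendsto_pure.mpr ?_
        filter_upwards [Filter.eventually_ge_atTop n₀] with n hn
        refine hR1 (c n) x ?_
        have hle := hle_sets (c.monotone hn)
        exact hn₀.imp (fun h => hle.1 h) (fun h => hle.2 h)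
      · have hnx : ∀ n, x ∉ ((c n).1.1 : Set X) ∪ ((c n).1.2 : Set X) := fun n h =>
          hx (Set.union_subset_union (hle_sets (hub n)).1 (hle_sets (hub n)).2 h)
        rw [hR2 s x hx]
        exact Filter.Tendsto.congr (fun n => (hR2 (c n) x (hnx n)).symm)
          ((continuous_adFalse.tendsto (r s x)).comp (hsig c s hs x))
  · -- convergence to the identity
    rintro ⟨x, i⟩
    cases i with
    | false =>
      exact Filter.Tendsto.congr (fun s => (hR3 s x).symm)
        ((continuous_adFalse.tendsto x).comp (hlim x))
    | true =>
      have hq₀ : ∃ q₀ : Γ, x ∈ (q₀.1.1 : Set X) ∪ (q₀.1.2 : Set X) := by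
        by_cases hxY : x ∈ Y
        · obtain ⟨q, hqΓ, hq⟩ := hcof
            (⟨{x}, Set.singleton_subset_iff.mpr hxY, Set.countable_singleton x⟩,
             ⟨∅, Set.empty_subset _, Set.countable_empty⟩)
          exact ⟨⟨q, hqΓ⟩, Or.inl (hq.1 rfl)⟩
        · obtain ⟨q, hqΓ, hq⟩ := hcof
            (⟨∅, Set.empty_subset _, Set.countable_empty⟩,
             ⟨{x}, Set.singleton_subset_iff.mpr hxY, Set.countable_singleton x⟩)
          exact ⟨⟨q, hqΓ⟩, Or.inr (hq.2 rfl)⟩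
      obtain ⟨q₀, hq₀⟩ := hq₀
      apply Filter.Tendsto.mono_right _ (pure_le_nhds _)
      refine Filter.tendsto_pure.mpr ?_
      filter_upwards [Filter.eventually_ge_atTop q₀] with q hq
      exact hR1 q x (Set.union_subset_union (hle_sets hq).1 (hle_sets hq).2 hq₀)
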